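/- arXiv:1005.1129 — 2 statements merged into one kernel-verified Lean document; each statement's English description precedes it below -/
import Mathlib

section
/- The double integral ∫_0^∞ ∫_0^∞ log(1 + x + y) · (1 + x)^{−2} (1 + y)^{−2} dx dy = π²/6. Consequently, if R_∞ and V_∞ are independent random variables each distributed on [0, ∞) with cdf x/(1 + x), then C_∞ = E[log(1 + R_∞ + V_∞)] = π²/6. -/
open MeasureTheory ProbabilityTheory Set Real Filter

/-! ### Auxiliary lemmas -/

private lemma hasDerivAt_log1p' {c y : ℝ} (h : 0 < c + y) :
    HasDerivAt (fun t : ℝ => Real.log (c + t)) ((c + y)⁻¹) y := by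
  have h1 : HasDerivAt (fun t : ℝ => c + t) 1 y := (hasDerivAt_id y).const_add c
  have := (Real.hasDerivAt_log h.ne').comp y h1
  simpa [Function.comp_def] using this

private lemma cdf_calc (a : ℝ) (ha : 0 ≤ a) :
    ∫ t in Set.Ioc (0:ℝ) a, ((1 + t) ^ 2)⁻¹ = a / (1 + a) := by
  rw [← intervalIntegral.integral_of_le ha]
  have h : ∀ x ∈ Set.uIcc (0:ℝ) a, HasDerivAt (fun t => -(1+t)⁻¹) (((1+x)^2)⁻¹) x := by
    intro x hx
    rw [Set.uIcc_of_le ha] at hx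
    have hx0 : (0:ℝ) < 1 + x := by nlinarith [hx.1]
    have : HasDerivAt (fun t : ℝ => 1 + t) 1 x := (hasDerivAt_id x).const_add 1
    have h2 := (this.inv hx0.ne').neg
    refine h2.congr_deriv ?_
    ring
  rw [intervalIntegral.integral_eq_sub_of_hasDerivAt h]
  · have h1 : (0:ℝ) < 1 + a := by linarith
    field_simp
    ring
  · apply ContinuousOn.intervalIntegrable
    intro x hx
    rw [Set.uIcc_of_le ha] at hx
    have hx0 : (0:ℝ) < 1 + x := by nlinarith [hx.1]
    exact ((continuousAt_const.add continuousAt_id).pow 2).continuousWithinAt.inv₀ (pow_ne_zero _ hx0.ne')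

private lemma deriv_inv_sq' {x : ℝ} (hx : 0 < 1 + x) :
    HasDerivAt (fun t : ℝ => -(1+t)⁻¹) (((1+x)^2)⁻¹) x := by
  have : HasDerivAt (fun t : ℝ => 1 + t) 1 x := (hasDerivAt_id x).const_add 1
  have h2 := (this.inv hx.ne').neg
  refine h2.congr_deriv ?_
  ring

private lemma tendsto_neg_inv' : Tendsto (fun t : ℝ => -(1+t)⁻¹) atTop (nhds 0) := by
  have h : Tendsto (fun t : ℝ => 1 + t) atTop atTop := tendsto_atTop_add_const_left _ _ tendsto_id
  have := (tendsto_inv_atTop_zero.comp h).neg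
  simpa using this

private lemma norm_calc' : ∫ x in Ioi (0:ℝ), ((1 + x) ^ 2)⁻¹ = 1 := by
  have := integral_Ioi_of_hasDerivAt_of_nonneg (g := fun t : ℝ => -(1+t)⁻¹)
    (g' := fun x => ((1+x)^2)⁻¹) (a := 0) (l := 0)
    ((deriv_inv_sq' (by norm_num)).continuousAt.continuousWithinAt)
    (fun x hx => deriv_inv_sq' (by simp at hx; linarith))
    (fun x hx => by positivity) tendsto_neg_inv'
  simpa using this

private lemma norm_integrable' : IntegrableOn (fun x => ((1 + x) ^ 2)⁻¹) (Ioi (0:ℝ)) := by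
  exact integrableOn_Ioi_deriv_of_nonneg
    ((deriv_inv_sq' (by norm_num)).continuousAt.continuousWithinAt)
    (fun x hx => deriv_inv_sq' (by simp at hx; linarith))
    (fun x hx => by positivity) tendsto_neg_inv'

private lemma tendsto_log_div_linear' (c : ℝ) (hc : 1 ≤ c) :
    Tendsto (fun y : ℝ => Real.log (c + y) * (1 + y)⁻¹) atTop (nhds 0) := by
  have hlog : Tendsto (fun y : ℝ => Real.log (c + y) / (c + y)) atTop (nhds 0) := by
    have h0 := Real.isLittleO_log_id_atTop.tendsto_div_nhds_zero
    exact h0.comp (tendsto_atTop_add_const_left _ c tendsto_id)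
  have hrat : Tendsto (fun y : ℝ => (c + y) / (1 + y)) atTop (nhds 1) := by
    have h1 : Tendsto (fun y : ℝ => (c - 1) * (1 + y)⁻¹) atTop (nhds 0) := by
      have := (tendsto_inv_atTop_zero.comp
        (tendsto_atTop_add_const_left _ (1:ℝ) tendsto_id)).const_mul (c - 1)
      simpa [Function.comp] using this
    have h2 : Tendsto (fun y : ℝ => 1 + (c - 1) * (1 + y)⁻¹) atTop (nhds 1) := by
      simpa using h1.const_add 1
    apply h2.congr'
    filter_upwards [eventually_gt_atTop (0:ℝ)] with y hy
    have hy1 : (1:ℝ) + y ≠ 0 := by positivity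
    field_simp
    ring
  have := hlog.mul hrat
  rw [mul_one] at this
  apply this.congr'
  filter_upwards [eventually_gt_atTop (0:ℝ)] with y hy
  have hy1 : (1:ℝ) + y ≠ 0 := by positivity
  have hy2 : c + y ≠ 0 := by positivity
  field_simp

private lemma log_sq_integrable' :
    IntegrableOn (fun y => Real.log (1 + y) * ((1 + y) ^ 2)⁻¹) (Ioi (0:ℝ)) := by
  have hderiv : ∀ y ∈ Ici (0:ℝ),
      HasDerivAt (fun t : ℝ => -((1 + Real.log (1+t)) * (1+t)⁻¹))
        (Real.log (1+y) * ((1+y)^2)⁻¹) y := by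
    intro y hy
    have hy0 : (0:ℝ) < 1 + y := by simp at hy; linarith
    have h1 : HasDerivAt (fun t : ℝ => 1 + Real.log (1+t)) ((1+y)⁻¹) y :=
      (hasDerivAt_log1p' hy0).const_add 1
    have h2 : HasDerivAt (fun t : ℝ => (1+t)⁻¹) (-((1+y)^2)⁻¹) y := by
      have h3 : HasDerivAt (fun t : ℝ => 1 + t) 1 y := (hasDerivAt_id y).const_add 1
      have := h3.inv hy0.ne'
      refine this.congr_deriv ?_; ring
    have := (h1.mul h2).neg
    refine this.congr_deriv ?_
    field_simp
    ring
  have htend : Tendsto (fun t : ℝ => -((1 + Real.log (1+t)) * (1+t)⁻¹)) atTop (nhds 0) := by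
    have h1 : Tendsto (fun t : ℝ => (1+t)⁻¹) atTop (nhds 0) := by
      have := tendsto_inv_atTop_zero.comp (tendsto_atTop_add_const_left _ (1:ℝ) tendsto_id)
      simpa [Function.comp_def] using this
    have h2 := tendsto_log_div_linear' 1 le_rfl
    have := ((h1.add h2).neg)
    simp only [add_zero, neg_zero] at this
    apply this.congr
    intro y; ring
  exact integrableOn_Ioi_deriv_of_nonneg'
    (fun y hy => hderiv y hy)
    (fun y hy => by
      have hy0 : (0:ℝ) < y := hy
      have : (0:ℝ) ≤ Real.log (1+y) := Real.log_nonneg (by linarith)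
      positivity)
    htend

section innerInt
variable {x : ℝ} (hx : 0 < x)

private noncomputable def Faux (x : ℝ) : ℝ → ℝ :=
  fun y => -(Real.log (1+x+y) * (1+y)⁻¹) + x⁻¹ * (Real.log (1+y) - Real.log (1+x+y))

include hx in
private lemma Faux_deriv {y : ℝ} (hy : 0 ≤ y) :
    HasDerivAt (Faux x) (Real.log (1+x+y) * ((1+y)^2)⁻¹) y := by
  have hy1 : (0:ℝ) < 1 + y := by linarith
  have hxy : (0:ℝ) < 1 + x + y := by linarith
  have h1 : HasDerivAt (fun t : ℝ => Real.log (1+x+t)) ((1+x+y)⁻¹) y := hasDerivAt_log1p' hxy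
  have h2 : HasDerivAt (fun t : ℝ => (1+t)⁻¹) (-((1+y)^2)⁻¹) y := by
    have h3 : HasDerivAt (fun t : ℝ => 1 + t) 1 y := (hasDerivAt_id y).const_add 1
    have := h3.inv hy1.ne'
    refine this.congr_deriv ?_; ring
  have h4 : HasDerivAt (fun t : ℝ => Real.log (1+t)) ((1+y)⁻¹) y := hasDerivAt_log1p' hy1
  have h5 := ((h1.mul h2).neg).add (((h4.sub h1)).const_mul x⁻¹)
  refine h5.congr_deriv ?_
  field_simp
  ring

include hx in
private lemma Faux_tendsto : Tendsto (Faux x) atTop (nhds 0) := by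
  have hxx : (0:ℝ) < 1 + x := by linarith
  have t1 : Tendsto (fun y : ℝ => -(Real.log (1+x+y) * (1+y)⁻¹)) atTop (nhds 0) := by
    have := (tendsto_log_div_linear' (1+x) (by linarith)).neg
    simpa using this
  have t2 : Tendsto (fun y : ℝ => x⁻¹ * (Real.log (1+y) - Real.log (1+x+y))) atTop (nhds 0) := by
    have hrat : Tendsto (fun y : ℝ => 1 - x * (1+x+y)⁻¹) atTop (nhds 1) := by
      have h1 : Tendsto (fun y : ℝ => x * (1+x+y)⁻¹) atTop (nhds 0) := by
        have := (tendsto_inv_atTop_zero.comp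
          (tendsto_atTop_add_const_left _ (1+x) tendsto_id)).const_mul x
        simpa [Function.comp] using this
      simpa using (h1.const_sub 1)
    have hlog : Tendsto (fun y : ℝ => Real.log (1 - x * (1+x+y)⁻¹)) atTop (nhds 0) := by
      have hc : ContinuousAt Real.log 1 := Real.continuousAt_log one_ne_zero
      have := hc.tendsto.comp hrat
      simpa [Function.comp_def] using this
    have := hlog.const_mul x⁻¹
    rw [mul_zero] at this
    apply this.congr'
    filter_upwards [eventually_gt_atTop (0:ℝ)] with y hy
    have hy1 : (0:ℝ) < 1 + y := by linarith
    have hxy : (0:ℝ) < 1 + x + y := by linarith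
    have : 1 - x * (1+x+y)⁻¹ = (1+y) / (1+x+y) := by field_simp; ring
    rw [this, Real.log_div hy1.ne' hxy.ne']
  have := t1.add t2
  rw [add_zero] at this
  exact this

include hx in
private lemma inner_integral :
    ∫ y in Ioi (0:ℝ), Real.log (1+x+y) * ((1+y)^2)⁻¹ = (1+x) * Real.log (1+x) / x := by
  have h := integral_Ioi_of_hasDerivAt_of_nonneg' (a := 0) (l := 0)
    (fun y hy => Faux_deriv hx hy)
    (fun y hy => by
      have hy0 : (0:ℝ) < y := hy
      have : (0:ℝ) ≤ Real.log (1+x+y) := Real.log_nonneg (by linarith)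
      positivity)
    (Faux_tendsto hx)
  rw [h]
  have hF0 : Faux x 0 = -((1+x) * Real.log (1+x) / x) := by
    simp only [Faux, add_zero]
    rw [Real.log_one]
    field_simp
    ring
  rw [hF0]; ring

include hx in
private lemma inner_integrable :
    IntegrableOn (fun y => Real.log (1+x+y) * ((1+y)^2)⁻¹) (Ioi (0:ℝ)) := by
  exact integrableOn_Ioi_deriv_of_nonneg' (fun y hy => Faux_deriv hx hy)
    (fun y hy => by
      have hy0 : (0:ℝ) < y := hy
      have : (0:ℝ) ≤ Real.log (1+x+y) := Real.log_nonneg (by linarith)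
      positivity)
    (Faux_tendsto hx)
end innerInt

private lemma pow_int' : ∀ n : ℕ, ∫ u in Ioo (0:ℝ) 1, u ^ n / ((n:ℝ)+1) = (1/((n:ℝ)+1)^2) := by
  intro n
  rw [← integral_Ioc_eq_integral_Ioo, ← intervalIntegral.integral_of_le zero_le_one]
  rw [intervalIntegral.integral_div, integral_pow]
  have hn : ((n:ℝ)+1) ≠ 0 := by positivity
  push_cast
  rw [one_pow]
  field_simp
  ring

private lemma summable_inv_sq' : Summable (fun n : ℕ => 1/((n:ℝ)+1)^2) := by
  have := (Real.summable_one_div_nat_pow (p := 2)).2 one_lt_two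
  have h2 := (summable_nat_add_iff (f := fun n : ℕ => 1/(n:ℝ)^2) 1).2 this
  apply h2.congr
  intro n; push_cast; ring_nf

private lemma tsum_inv_sq' : ∑' n : ℕ, 1/((n:ℝ)+1)^2 = π^2/6 := by
  have h := hasSum_zeta_two.tsum_eq
  rw [hasSum_zeta_two.summable.tsum_eq_zero_add] at h
  simp only [Nat.cast_zero] at h
  norm_num at h
  rw [← h]
  apply tsum_congr
  intro n; push_cast; ring_nf

private lemma basel_integral' : ∫ u in Ioo (0:ℝ) 1, -Real.log (1-u) / u = π^2/6 := by
  have hae : ∀ᵐ u ∂(volume.restrict (Ioo (0:ℝ) 1)),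
      -Real.log (1-u) / u = ∑' n : ℕ, u ^ n / ((n:ℝ)+1) := by
    rw [ae_restrict_iff' measurableSet_Ioo]
    filter_upwards with u hu
    obtain ⟨hu0, hu1⟩ := hu
    have habs : |u| < 1 := abs_lt.2 ⟨by linarith, hu1⟩
    have hs := Real.hasSum_pow_div_log_of_abs_lt_one habs
    have hs2 : HasSum (fun n : ℕ => u ^ n / ((n:ℝ)+1)) (-Real.log (1-u) / u) := by
      have := hs.div_const u
      apply this.congr_fun
      intro n
      rw [pow_succ]
      field_simp
    exact hs2.tsum_eq.symm
  rw [integral_congr_ae hae]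
  have hmeas : ∀ n : ℕ, AEStronglyMeasurable (fun u : ℝ => u ^ n / ((n:ℝ)+1))
      (volume.restrict (Ioo (0:ℝ) 1)) :=
    fun n => ((continuous_pow n).div_const _).aestronglyMeasurable
  have hint : ∀ n : ℕ, IntegrableOn (fun u : ℝ => u ^ n / ((n:ℝ)+1)) (Ioo (0:ℝ) 1) := by
    intro n
    exact (((continuous_pow n).div_const _).integrableOn_Icc (a := 0) (b := 1)).mono_set
      Ioo_subset_Icc_self
  have hlint : ∀ n : ℕ, (∫⁻ u in Ioo (0:ℝ) 1, ‖u ^ n / ((n:ℝ)+1)‖ₑ)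
      = ENNReal.ofReal (1/((n:ℝ)+1)^2) := by
    intro n
    rw [← pow_int' n, ofReal_integral_eq_lintegral_ofReal (hint n)]
    · apply lintegral_congr_ae
      filter_upwards [ae_restrict_mem measurableSet_Ioo] with u hu
      have hu0 : (0:ℝ) ≤ u ^ n / ((n:ℝ)+1) := div_nonneg (pow_nonneg hu.1.le n) (by positivity)
      rw [← Real.enorm_eq_ofReal hu0]
    · filter_upwards [ae_restrict_mem measurableSet_Ioo] with u hu
      exact div_nonneg (pow_nonneg hu.1.le n) (by positivity)
  rw [integral_tsum hmeas]
  · rw [← tsum_inv_sq']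
    exact tsum_congr pow_int'
  · rw [funext hlint, ← ENNReal.ofReal_tsum_of_nonneg (fun n => by positivity) summable_inv_sq']
    exact ENNReal.ofReal_ne_top

private lemma image_phi' : (fun u : ℝ => u / (1 - u)) '' Ioo 0 1 = Ioi 0 := by
  ext x
  constructor
  · rintro ⟨u, ⟨hu0, hu1⟩, rfl⟩
    have : 0 < 1 - u := by linarith
    exact div_pos hu0 this
  · intro hx
    refine ⟨x / (1 + x), ⟨?_, ?_⟩, ?_⟩
    · exact div_pos hx (by linarith [(mem_Ioi.1 hx).le])
    · rw [div_lt_one (by linarith [(mem_Ioi.1 hx)])]; linarith [mem_Ioi.1 hx]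
    · have hx0 : (0:ℝ) < x := hx
      have h1 : (1:ℝ) + x ≠ 0 := by positivity
      field_simp
      ring

private lemma phi_inj' : InjOn (fun u : ℝ => u / (1 - u)) (Ioo 0 1) := by
  intro u hu v hv h
  have hu1 : (1:ℝ) - u ≠ 0 := by have := hu.2; intro h'; linarith [sub_eq_zero.1 h']
  have hv1 : (1:ℝ) - v ≠ 0 := by have := hv.2; intro h'; linarith [sub_eq_zero.1 h']
  field_simp at h
  linarith [h]

private lemma phi_deriv' {u : ℝ} (hu : u ∈ Ioo (0:ℝ) 1) :
    HasDerivWithinAt (fun u : ℝ => u / (1 - u)) (((1-u)^2)⁻¹) (Ioo 0 1) u := by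
  have h1 : (1:ℝ) - u ≠ 0 := by have := hu.2; intro h'; linarith [sub_eq_zero.1 h']
  have hd : HasDerivAt (fun t : ℝ => t / (1 - t)) (((1-u)^2)⁻¹) u := by
    have hnum : HasDerivAt (fun t : ℝ => t) 1 u := hasDerivAt_id u
    have hden : HasDerivAt (fun t : ℝ => 1 - t) (-1) u := by
      simpa using ((hasDerivAt_id u).const_sub 1)
    have := hnum.div hden h1
    refine this.congr_deriv ?_
    ring
  exact hd.hasDerivWithinAt

private lemma outer_change' :
    ∫ x in Ioi (0:ℝ), Real.log (1+x) / (x * (1+x)) = ∫ u in Ioo (0:ℝ) 1, -Real.log (1-u) / u := by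
  rw [← image_phi']
  rw [integral_image_eq_integral_abs_deriv_smul measurableSet_Ioo (fun u hu => phi_deriv' hu)
    phi_inj']
  apply setIntegral_congr_fun measurableSet_Ioo
  intro u hu
  obtain ⟨hu0, hu1⟩ := hu
  have h1u : (0:ℝ) < 1 - u := by linarith
  have key : 1 + u / (1 - u) = (1 - u)⁻¹ := by field_simp; ring
  simp only [smul_eq_mul, key]
  rw [Real.log_inv, abs_of_pos (by positivity : (0:ℝ) < ((1-u)^2)⁻¹)]
  have hu' : u / (1 - u) ≠ 0 := by positivity
  field_simp

/-- The iterated integral of part 1. -/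
private lemma part1 :
    (∫ x in Ioi (0 : ℝ), ∫ y in Ioi (0 : ℝ),
        Real.log (1 + x + y) * ((1 + x) ^ 2)⁻¹ * ((1 + y) ^ 2)⁻¹) = π ^ 2 / 6 := by
  have hpt : ∀ x ∈ Ioi (0:ℝ),
      (∫ y in Ioi (0 : ℝ), Real.log (1 + x + y) * ((1 + x) ^ 2)⁻¹ * ((1 + y) ^ 2)⁻¹)
        = Real.log (1+x) / (x * (1+x)) := by
    intro x hx
    have hx0 : (0:ℝ) < x := hx
    have h1 : ∀ y : ℝ, Real.log (1 + x + y) * ((1 + x) ^ 2)⁻¹ * ((1 + y) ^ 2)⁻¹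
        = ((1 + x) ^ 2)⁻¹ * (Real.log (1 + x + y) * ((1 + y) ^ 2)⁻¹) := fun y => by ring
    rw [funext h1, integral_const_mul, inner_integral hx0]
    have hx1 : (0:ℝ) < 1 + x := by linarith
    field_simp
  rw [setIntegral_congr_fun measurableSet_Ioi hpt, outer_change', basel_integral']

private noncomputable def dens : ℝ → NNReal := fun x => Real.toNNReal (((1+x)^2)⁻¹)

private lemma dens_meas : Measurable dens :=
  ((measurable_const.add measurable_id).pow_const 2).inv.real_toNNReal

private lemma dens_coe (x : ℝ) : (dens x : ENNReal) = ENNReal.ofReal (((1+x)^2)⁻¹) := rfl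

private noncomputable def rho : Measure ℝ :=
  (volume.restrict (Ioi 0)).withDensity (fun x => (dens x : ENNReal))

private lemma rho_apply {s : Set ℝ} (hs : MeasurableSet s) :
    rho s = ∫⁻ x in s ∩ Ioi 0, ENNReal.ofReal (((1+x)^2)⁻¹) := by
  rw [rho, withDensity_apply _ hs, Measure.restrict_restrict hs]
  rfl

private lemma lint_eq (s : Set ℝ) (hs : MeasurableSet s) (h : IntegrableOn (fun x => ((1+x)^2)⁻¹) s) :
    ∫⁻ x in s, ENNReal.ofReal (((1+x)^2)⁻¹) = ENNReal.ofReal (∫ x in s, ((1+x)^2)⁻¹) := by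
  rw [ofReal_integral_eq_lintegral_ofReal h]
  filter_upwards with x
  positivity

private instance rho_prob : IsProbabilityMeasure rho := by
  constructor
  rw [rho_apply MeasurableSet.univ, univ_inter,
    lint_eq _ measurableSet_Ioi norm_integrable', norm_calc', ENNReal.ofReal_one]

private lemma rho_Iic (a : ℝ) : rho (Iic a) = ENNReal.ofReal (max a 0 / (1 + max a 0)) := by
  rcases le_or_gt 0 a with ha | ha
  · rw [max_eq_left ha, rho_apply measurableSet_Iic]
    have : Iic a ∩ Ioi 0 = Ioc 0 a := by ext t; simp [and_comm]
    rw [this, lint_eq _ measurableSet_Ioc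
      (norm_integrable'.mono_set Ioc_subset_Ioi_self), cdf_calc a ha]
  · rw [max_eq_right ha.le, rho_apply measurableSet_Iic]
    have : Iic a ∩ Ioi 0 = (∅ : Set ℝ) := by
      ext t; simp only [mem_inter_iff, mem_Iic, mem_Ioi, mem_empty_iff_false, iff_false]
      rintro ⟨h1, h2⟩; linarith
    simp [this]

private lemma rho_law {Ω : Type} [MeasurableSpace Ω] (μ : Measure Ω) [IsProbabilityMeasure μ]
    (W : Ω → ℝ) (hW : Measurable W) (hpos : ∀ᵐ ω ∂μ, 0 ≤ W ω)
    (hcdf : ∀ x : ℝ, 0 ≤ x → (μ {ω | W ω ≤ x}).toReal = x / (1 + x)) :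
    μ.map W = rho := by
  have : IsProbabilityMeasure (μ.map W) := Measure.isProbabilityMeasure_map hW.aemeasurable
  apply Measure.ext_of_Iic
  intro a
  rw [Measure.map_apply hW measurableSet_Iic, rho_Iic]
  have hpre : W ⁻¹' (Iic a) = {ω | W ω ≤ a} := rfl
  rw [hpre]
  rcases le_or_gt 0 a with ha | ha
  · rw [max_eq_left ha, ← hcdf a ha, ENNReal.ofReal_toReal (measure_ne_top μ _)]
  · rw [max_eq_right ha.le]
    have h0 : μ {ω | W ω ≤ a} = 0 := by
      refine measure_mono_null ?_ (ae_iff.mp hpos)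
      intro ω hω
      simp only [mem_setOf_eq] at *
      intro h; linarith
    simp [h0]

private lemma ae_pos_rho : ∀ᵐ x ∂rho, 0 < x := by
  have : rho {x : ℝ | ¬ 0 < x} = 0 := by
    have hs : {x : ℝ | ¬ 0 < x} = Iic 0 := by ext x; simp
    rw [hs, rho_Iic]
    simp
  exact this

private lemma integrable_log_rho : Integrable (fun x => Real.log (1+x)) rho := by
  rw [rho, integrable_withDensity_iff (dens_meas.coe_nnreal_ennreal)
    (Filter.Eventually.of_forall fun x => ENNReal.coe_lt_top)]
  have : (fun x => Real.log (1+x) * ((dens x : ENNReal)).toReal)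
      = fun x => Real.log (1+x) * ((1+x)^2)⁻¹ := by
    funext x
    rw [dens_coe, ENNReal.toReal_ofReal (by positivity)]
  rw [this]
  exact log_sq_integrable'

private lemma integrable_main : Integrable (fun p : ℝ × ℝ => Real.log (1 + p.1 + p.2)) (rho.prod rho) := by
  have hmeas : AEStronglyMeasurable (fun p : ℝ × ℝ => Real.log (1 + p.1 + p.2)) (rho.prod rho) :=
    (Real.measurable_log.comp ((measurable_const.add measurable_fst).add
      measurable_snd)).aestronglyMeasurable
  have hG1 : Integrable (fun p : ℝ × ℝ => Real.log (1 + p.1)) (rho.prod rho) := by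
    have h := (integrable_map_measure (μ := rho.prod rho) (f := Prod.fst)
      (g := fun x : ℝ => Real.log (1+x))
      (by rw [Measure.map_fst_prod]; simp
          exact (Real.measurable_log.comp (measurable_const.add measurable_id)).aestronglyMeasurable)
      measurable_fst.aemeasurable).mp
    have h2 : Integrable (fun x : ℝ => Real.log (1+x)) ((rho.prod rho).map Prod.fst) := by
      rw [Measure.map_fst_prod]; simpa using integrable_log_rho
    exact h h2
  have hG2 : Integrable (fun p : ℝ × ℝ => Real.log (1 + p.2)) (rho.prod rho) := by
    have h := (integrable_map_measure (μ := rho.prod rho) (f := Prod.snd)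
      (g := fun x : ℝ => Real.log (1+x))
      (by rw [Measure.map_snd_prod]; simp
          exact (Real.measurable_log.comp (measurable_const.add measurable_id)).aestronglyMeasurable)
      measurable_snd.aemeasurable).mp
    have h2 : Integrable (fun x : ℝ => Real.log (1+x)) ((rho.prod rho).map Prod.snd) := by
      rw [Measure.map_snd_prod]; simpa using integrable_log_rho
    exact h h2
  have hae : ∀ᵐ p ∂(rho.prod rho), 0 < p.1 ∧ 0 < p.2 := by
    have hset : {p : ℝ × ℝ | ¬ (0 < p.1 ∧ 0 < p.2)} ⊆
        ((Iic 0) ×ˢ (univ : Set ℝ)) ∪ ((univ : Set ℝ) ×ˢ (Iic 0)) := by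
      intro p hp
      simp only [mem_setOf_eq, not_and_or, not_lt] at hp
      rcases hp with h | h
      · exact Or.inl ⟨h, mem_univ _⟩
      · exact Or.inr ⟨mem_univ _, h⟩
    have h0 : rho (Iic 0) = 0 := by rw [rho_Iic]; simp
    refine ae_iff.2 (measure_mono_null hset (measure_union_null ?_ ?_))
    · rw [Measure.prod_prod, h0, zero_mul]
    · rw [Measure.prod_prod, h0, mul_zero]
  apply (hG1.add hG2).mono hmeas
  filter_upwards [hae] with p hp
  have h1 : (0:ℝ) < p.1 := hp.1
  have h2 : (0:ℝ) < p.2 := hp.2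
  have hn : (0:ℝ) ≤ Real.log (1 + p.1 + p.2) := Real.log_nonneg (by linarith)
  rw [Real.norm_of_nonneg hn]
  have hb : Real.log (1 + p.1 + p.2) ≤ Real.log (1+p.1) + Real.log (1+p.2) := by
    rw [← Real.log_mul (by positivity) (by positivity)]
    apply Real.log_le_log (by positivity)
    nlinarith
  calc Real.log (1 + p.1 + p.2) ≤ Real.log (1+p.1) + Real.log (1+p.2) := hb
    _ ≤ ‖Real.log (1+p.1) + Real.log (1+p.2)‖ := le_abs_self _

private lemma part2_core {Ω : Type} [MeasurableSpace Ω] (μ : Measure Ω) [IsProbabilityMeasure μ]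
    (R V : Ω → ℝ) (hR : Measurable R) (hV : Measurable V) (hind : IndepFun R V μ)
    (hRpos : ∀ᵐ ω ∂μ, 0 ≤ R ω) (hVpos : ∀ᵐ ω ∂μ, 0 ≤ V ω)
    (hRcdf : ∀ x : ℝ, 0 ≤ x → (μ {ω | R ω ≤ x}).toReal = x / (1 + x))
    (hVcdf : ∀ x : ℝ, 0 ≤ x → (μ {ω | V ω ≤ x}).toReal = x / (1 + x)) :
    ∫ ω, Real.log (1 + R ω + V ω) ∂μ
      = ∫ x in Ioi (0 : ℝ), ∫ y in Ioi (0 : ℝ),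
          Real.log (1 + x + y) * ((1 + x) ^ 2)⁻¹ * ((1 + y) ^ 2)⁻¹ := by
  have hmap : μ.map (fun ω => (R ω, V ω)) = rho.prod rho := by
    rw [(indepFun_iff_map_prod_eq_prod_map_map hR.aemeasurable hV.aemeasurable).mp hind,
      rho_law μ R hR hRpos hRcdf, rho_law μ V hV hVpos hVcdf]
  have hstep1 : ∫ ω, Real.log (1 + R ω + V ω) ∂μ
      = ∫ p : ℝ × ℝ, Real.log (1 + p.1 + p.2) ∂(rho.prod rho) := by
    rw [← hmap, integral_map (hR.prodMk hV).aemeasurable]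
    exact (Real.measurable_log.comp ((measurable_const.add measurable_fst).add
      measurable_snd)).aestronglyMeasurable
  rw [hstep1, integral_prod _ integrable_main]
  have houter : ∀ x : ℝ, (∫ y, Real.log (1 + x + y) ∂rho)
      = ∫ y in Ioi (0:ℝ), ((1+y)^2)⁻¹ * Real.log (1 + x + y) := by
    intro x
    rw [rho, integral_withDensity_eq_integral_smul dens_meas]
    apply setIntegral_congr_fun measurableSet_Ioi
    intro y hy
    have hd : (dens y : ℝ) = ((1+y)^2)⁻¹ := Real.coe_toNNReal _ (by positivity)
    simp only [NNReal.smul_def, smul_eq_mul, hd]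
  rw [funext houter]
  rw [rho, integral_withDensity_eq_integral_smul dens_meas]
  apply setIntegral_congr_fun measurableSet_Ioi
  intro x hx
  have hd : (dens x : ℝ) = ((1+x)^2)⁻¹ := Real.coe_toNNReal _ (by positivity)
  simp only [NNReal.smul_def, smul_eq_mul, hd]
  rw [← integral_const_mul]
  apply setIntegral_congr_fun measurableSet_Ioi
  intro y hy
  ring

/-- `∫_0^∞ ∫_0^∞ log(1+x+y)(1+x)^{−2}(1+y)^{−2} dx dy = π²/6`; consequently,
if `R_∞` and `V_∞` are independent, each with cdf `x/(1+x)` on `[0,∞)`, then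
`C_∞ = E[log(1 + R_∞ + V_∞)] = π²/6`. -/
theorem beta_example_Cinfty :
    (∫ x in Ioi (0 : ℝ), ∫ y in Ioi (0 : ℝ),
        Real.log (1 + x + y) * ((1 + x) ^ 2)⁻¹ * ((1 + y) ^ 2)⁻¹) = π ^ 2 / 6 ∧
    (∀ (Ω : Type) (_ : MeasurableSpace Ω) (μ : Measure Ω), IsProbabilityMeasure μ →
      ∀ R V : Ω → ℝ, Measurable R → Measurable V → IndepFun R V μ →
      (∀ᵐ ω ∂μ, 0 ≤ R ω) → (∀ᵐ ω ∂μ, 0 ≤ V ω) →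
      (∀ x : ℝ, 0 ≤ x → (μ {ω | R ω ≤ x}).toReal = x / (1 + x)) →
      (∀ x : ℝ, 0 ≤ x → (μ {ω | V ω ≤ x}).toReal = x / (1 + x)) →
      ∫ ω, Real.log (1 + R ω + V ω) ∂μ = π ^ 2 / 6) := by
  refine ⟨part1, ?_⟩
  intro Ω mΩ μ hμ R V hR hV hind hRpos hVpos hRcdf hVcdf
  rw [part2_core μ R V hR hV hind hRpos hVpos hRcdf hVcdf]
  exact part1
end

section
/- In the beta changepoint example: (i) if X has density f(x) = 2x on [0,1] (the beta(2,1) distribution) and Λ = 1/X − 1, then P(Λ ≤ t) = 1 − (1 + t)^{−2} for every t ≥ 0; (ii) if X has density g(x) = 2(1 − x) on [0,1] (the beta(1,2) distribution) and Λ = 1/X − 1, then P(Λ^{−1} ≤ t) = 1 − (1 + t)^{−2} for every t ≥ 0, so Λ under f and Λ^{−1} under g have the same distribution; (iii) the cumulative distribution function Q(x) = x/(1 + x), x ≥ 0, satisfies the stationary fixed-point equation Q(x) = ∫_0^∞ F_∞( x/(1 + y) ) dQ(y), equivalently Q(x) = 1 − ∫_0^∞ (1 + y)²/(1 + x + y)²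 dQ(y), where F_∞(t) = 1 − (1 + t)^{−2}; hence x/(1+x) is the stationary distribution of the Shiryaev–Roberts recursion R_{n+1} = (1 + R_n)Λ_{n+1} when Λ has cdf F_∞. -/
open MeasureTheory Set Filter

lemma key_int (c : ℝ) (hc : 0 < c) :
    (∫ y in Ioi (0:ℝ), ((c + y) ^ 2)⁻¹) = c⁻¹ ∧
    IntegrableOn (fun y => ((c + y) ^ 2)⁻¹) (Ioi (0:ℝ)) := by
  have hderiv : ∀ y ∈ Ici (0:ℝ), HasDerivAt (fun y => -(c + y)⁻¹) (((c + y) ^ 2)⁻¹) y := by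
    intro y hy
    have hcy : (0:ℝ) < c + y := by have := hy.out; linarith
    have h : HasDerivAt (fun y : ℝ => c + y) 1 y := (hasDerivAt_id y).const_add c
    have := (h.inv hcy.ne').neg
    have h2 : HasDerivAt (fun y => -(c + y)⁻¹) (-(-1 / (c + y) ^ 2)) y := this
    convert h2 using 1
    ring
  have hpos : ∀ y ∈ Ioi (0:ℝ), 0 ≤ ((c + y) ^ 2)⁻¹ := fun y _ => by positivity
  have htend : Tendsto (fun y : ℝ => -(c + y)⁻¹) atTop (nhds 0) := by
    have h1 : Tendsto (fun y : ℝ => c + y) atTop atTop :=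
      tendsto_atTop_add_const_left _ _ tendsto_id
    simpa using (tendsto_inv_atTop_zero.comp h1).neg
  constructor
  · have := integral_Ioi_of_hasDerivAt_of_nonneg' hderiv hpos htend
    simpa using this
  · exact integrableOn_Ioi_deriv_of_nonneg' hderiv hpos htend


/-- **Statement 19** (beta changepoint example): (i) if `X ~ beta(2,1)` (density `2x` on
`[0,1]`) and `Λ = 1/X − 1`, then `P(Λ ≤ t) = 1 − (1+t)^{−2}` for `t ≥ 0`; (ii) if
`X ~ beta(1,2)` (density `2(1−x)` on `[0,1]`), then `P(Λ^{−1} ≤ t) = 1 − (1+t)^{−2}` for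
`t ≥ 0`, so `Λ` under `f` and `Λ^{−1}` under `g` have the same distribution; (iii) the cdf
`Q(x) = x/(1+x)` satisfies the stationary fixed-point equation of the Shiryaev–Roberts
recursion `R_{n+1} = (1 + R_n)Λ_{n+1}`, in both equivalent forms. -/
theorem beta_example_distributions :
    (∀ (Ω : Type) (_ : MeasurableSpace Ω) (μ : Measure Ω), IsProbabilityMeasure μ →
      ∀ X : Ω → ℝ, Measurable X →
      Measure.map X μ =
        (volume.restrict (Icc (0 : ℝ) 1)).withDensity (fun x => ENNReal.ofReal (2 * x)) →
      ∀ t : ℝ, 0 ≤ t →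
        (μ {ω | 1 / X ω - 1 ≤ t}).toReal = 1 - ((1 + t) ^ 2)⁻¹) ∧
    (∀ (Ω : Type) (_ : MeasurableSpace Ω) (μ : Measure Ω), IsProbabilityMeasure μ →
      ∀ X : Ω → ℝ, Measurable X →
      Measure.map X μ =
        (volume.restrict (Icc (0 : ℝ) 1)).withDensity (fun x => ENNReal.ofReal (2 * (1 - x))) →
      ∀ t : ℝ, 0 ≤ t →
        (μ {ω | (1 / X ω - 1)⁻¹ ≤ t}).toReal = 1 - ((1 + t) ^ 2)⁻¹) ∧
    (∀ x : ℝ, 0 ≤ x →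
      x / (1 + x) =
        ∫ y in Ioi (0 : ℝ), (1 - ((1 + x / (1 + y)) ^ 2)⁻¹) * ((1 + y) ^ 2)⁻¹ ∧
      x / (1 + x) =
        1 - ∫ y in Ioi (0 : ℝ), ((1 + y) ^ 2 / (1 + x + y) ^ 2) * ((1 + y) ^ 2)⁻¹) := by
  refine ⟨?_, ?_, ?_⟩
  ·
    intro Ω mΩ μ hμ X hX hmap t ht
    set a : ℝ := (1 + t)⁻¹ with ha
    have h1t : (0:ℝ) < 1 + t := by linarith
    have ha0 : 0 < a := by positivity
    have ha1 : a ≤ 1 := by rw [ha]; rw [inv_le_one_iff₀]; right; linarith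
    have hSm : MeasurableSet {x : ℝ | 1 / x - 1 ≤ t} := by
      apply measurableSet_le (by fun_prop) measurable_const
    have hpre : {ω | 1 / X ω - 1 ≤ t} = X ⁻¹' {x : ℝ | 1 / x - 1 ≤ t} := rfl
    have hμS : μ {ω | 1 / X ω - 1 ≤ t}
        = ∫⁻ x in {x : ℝ | 1 / x - 1 ≤ t} ∩ Icc (0:ℝ) 1, ENNReal.ofReal (2 * x) := by
      rw [hpre, ← Measure.map_apply hX hSm, hmap, withDensity_apply _ hSm,
        Measure.restrict_restrict hSm]
    have hset : {x : ℝ | 1 / x - 1 ≤ t} ∩ Icc (0:ℝ) 1 = {0} ∪ Icc a 1 := by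
      ext x
      simp only [mem_inter_iff, mem_setOf_eq, mem_Icc, mem_union, mem_singleton_iff]
      constructor
      · rintro ⟨h1, h2, h3⟩
        rcases eq_or_lt_of_le h2 with h|h
        · left; exact h.symm
        · right
          refine ⟨?_, h3⟩
          have : 1 / x ≤ 1 + t := by linarith
          rw [div_le_iff₀ h] at this
          rw [ha, inv_le_iff_one_le_mul₀ h1t]
          nlinarith
      · rintro (rfl|⟨h1, h2⟩)
        · simp; linarith
        · have hx0 : 0 < x := lt_of_lt_of_le ha0 h1
          refine ⟨?_, le_of_lt hx0, h2⟩
          have : 1 ≤ (1 + t) * x := by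
            rw [ha, inv_le_iff_one_le_mul₀ h1t] at h1; linarith [h1]
          have : 1 / x ≤ 1 + t := by rw [div_le_iff₀ hx0]; linarith
          linarith
    have hdisj : Disjoint ({0} : Set ℝ) (Icc a 1) := by
      rw [disjoint_singleton_left]
      intro h
      exact absurd h.1 (by linarith)
    rw [hμS, hset, lintegral_union measurableSet_Icc hdisj,
      setLIntegral_measure_zero _ _ Real.volume_singleton, zero_add]
    have hnn : 0 ≤ᵐ[volume.restrict (Icc a 1)] fun x : ℝ => 2 * x := by
      filter_upwards [ae_restrict_mem measurableSet_Icc] with x hx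
      show (0:ℝ) ≤ 2 * x
      nlinarith [hx.1]
    have hint : Integrable (fun x : ℝ => 2 * x) (volume.restrict (Icc a 1)) :=
      (continuous_const.mul continuous_id).integrableOn_Icc
    rw [← ofReal_integral_eq_lintegral_ofReal hint hnn]
    have : ∫ x in Icc a 1, 2 * x = 1 - a ^ 2 := by
      rw [integral_Icc_eq_integral_Ioc, ← intervalIntegral.integral_of_le ha1,
        intervalIntegral.integral_const_mul, integral_id]
      ring
    rw [this, ENNReal.toReal_ofReal (by nlinarith)]
    rw [ha]
    rw [inv_pow]
  ·
    intro Ω mΩ μ hμ X hX hmap t ht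
    set s : ℝ := t / (1 + t) with hs
    have h1t : (0:ℝ) < 1 + t := by linarith
    have hs0 : 0 ≤ s := by positivity
    have hs1 : s < 1 := by rw [hs, div_lt_one h1t]; linarith
    have hSm : MeasurableSet {x : ℝ | (1 / x - 1)⁻¹ ≤ t} := by
      apply measurableSet_le (by fun_prop) measurable_const
    have hpre : {ω | (1 / X ω - 1)⁻¹ ≤ t} = X ⁻¹' {x : ℝ | (1 / x - 1)⁻¹ ≤ t} := rfl
    have hμS : μ {ω | (1 / X ω - 1)⁻¹ ≤ t}
        = ∫⁻ x in {x : ℝ | (1 / x - 1)⁻¹ ≤ t} ∩ Icc (0:ℝ) 1, ENNReal.ofReal (2 * (1 - x)) := by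
      rw [hpre, ← Measure.map_apply hX hSm, hmap, withDensity_apply _ hSm,
        Measure.restrict_restrict hSm]
    have hset : {x : ℝ | (1 / x - 1)⁻¹ ≤ t} ∩ Icc (0:ℝ) 1 = Icc 0 s ∪ {1} := by
      ext x
      simp only [mem_inter_iff, mem_setOf_eq, mem_Icc, mem_union, mem_singleton_iff]
      constructor
      · rintro ⟨h1, h2, h3⟩
        rcases eq_or_lt_of_le h3 with h|hlt1
        · right; exact h
        rcases eq_or_lt_of_le h2 with h|hlt0
        · left; exact ⟨h2, by rw [← h]; exact hs0⟩
        left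
        refine ⟨h2, ?_⟩
        have hxeq : 1 / x - 1 = (1 - x) / x := by field_simp
        rw [hxeq, inv_div] at h1
        rw [div_le_iff₀ (by linarith : (0:ℝ) < 1 - x)] at h1
        rw [hs, le_div_iff₀ h1t]
        nlinarith
      · rintro (⟨h1, h2⟩|rfl)
        · have hx1 : x < 1 := lt_of_le_of_lt h2 hs1
          refine ⟨?_, h1, le_of_lt hx1⟩
          rcases eq_or_lt_of_le h1 with h|hx0
          · rw [← h]; norm_num; linarith
          have hxeq : 1 / x - 1 = (1 - x) / x := by field_simp
          rw [hxeq, inv_div, div_le_iff₀ (by linarith : (0:ℝ) < 1 - x)]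
          rw [hs, le_div_iff₀ h1t] at h2
          nlinarith
        · norm_num
          exact ht
    have hdisj : Disjoint (Icc (0:ℝ) s) ({1} : Set ℝ) := by
      rw [disjoint_singleton_right]
      intro h
      exact absurd h.2 (by linarith)
    rw [hμS, hset, lintegral_union (measurableSet_singleton 1) hdisj,
      setLIntegral_measure_zero _ _ Real.volume_singleton, add_zero]
    have hnn : 0 ≤ᵐ[volume.restrict (Icc (0:ℝ) s)] fun x : ℝ => 2 * (1 - x) := by
      filter_upwards [ae_restrict_mem measurableSet_Icc] with x hx
      show (0:ℝ) ≤ 2 * (1 - x)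
      nlinarith [hx.2, hs1]
    have hint : Integrable (fun x : ℝ => 2 * (1 - x)) (volume.restrict (Icc (0:ℝ) s)) :=
      (continuous_const.mul (continuous_const.sub continuous_id)).integrableOn_Icc
    rw [← ofReal_integral_eq_lintegral_ofReal hint hnn]
    have hval : ∫ x in Icc (0:ℝ) s, 2 * (1 - x) = 2 * s - s ^ 2 := by
      rw [integral_Icc_eq_integral_Ioc, ← intervalIntegral.integral_of_le hs0]
      have hd : ∀ x ∈ uIcc (0:ℝ) s, HasDerivAt (fun x : ℝ => 2 * x - x ^ 2) (2 * (1 - x)) x := by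
        intro x _
        have h1 : HasDerivAt (fun y : ℝ => 2 * y - y ^ 2) (2 * 1 - 2 * x ^ 1) x :=
          ((hasDerivAt_id x).const_mul 2).sub (hasDerivAt_pow 2 x)
        convert h1 using 1
        ring
      rw [intervalIntegral.integral_eq_sub_of_hasDerivAt hd
        ((continuous_const.mul (continuous_const.sub continuous_id)).intervalIntegrable _ _)]
      ring
    rw [hval, ENNReal.toReal_ofReal (by nlinarith)]
    rw [hs]
    field_simp
    ring
  ·
    intro x hx
    have hx1 : (0:ℝ) < 1 + x := by linarith
    obtain ⟨hI1, hInt1⟩ := key_int 1 one_pos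
    obtain ⟨hI2, hInt2⟩ := key_int (1 + x) hx1
    constructor
    · have he : ∀ y ∈ Ioi (0:ℝ),
          (1 - ((1 + x / (1 + y)) ^ 2)⁻¹) * ((1 + y) ^ 2)⁻¹
            = ((1 + y) ^ 2)⁻¹ - ((1 + x + y) ^ 2)⁻¹ := by
        intro y hy
        have hy0 : (0:ℝ) < 1 + y := by have := hy.out; linarith
        have hxy : (0:ℝ) < 1 + x + y := by linarith
        field_simp
        ring
      rw [setIntegral_congr_fun measurableSet_Ioi he, integral_sub hInt1 hInt2, hI1, hI2]
      field_simp
      ring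
    · have he : ∀ y ∈ Ioi (0:ℝ),
          ((1 + y) ^ 2 / (1 + x + y) ^ 2) * ((1 + y) ^ 2)⁻¹ = ((1 + x + y) ^ 2)⁻¹ := by
        intro y hy
        have hy0 : (0:ℝ) < 1 + y := by have := hy.out; linarith
        have hxy : (0:ℝ) < 1 + x + y := by linarith
        field_simp
      rw [setIntegral_congr_fun measurableSet_Ioi he, hI2]
      field_simp
      ring
end
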